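/- Let G = (V, w) be a weighted graph and ℒ ⊆ ℳ(G) a maximal cross-free subfamily of the minimum cuts of G (every mincut not in ℒ crosses some member of ℒ). Then span{χ(S) : S ∈ ℒ} = span{χ(S) : S ∈ ℳ(G)}. -/

import Mathlib

open Finset

/-- Two finite sets overlap if their intersection and both differences are nonempty. -/
def overlap {V : Type*} [DecidableEq V] (X Y : Finset V) : Prop :=
  (X ∩ Y).Nonempty ∧ (X \ Y).Nonempty ∧ (Y \ X).Nonempty

/-- Two shores cross if all four corner sets are nonempty. -/
def crossing {V : Type*} [DecidableEq V] [Fintype V] (X Y : Finset V) : Prop :=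
  (X ∩ Y).Nonempty ∧ (X \ Y).Nonempty ∧ (Y \ X).Nonempty ∧ (Xᶜ ∩ Yᶜ).Nonempty

/-- X is the shore of a cut: nonempty and proper. -/
def isCutShore {V : Type*} [Fintype V] (X : Finset V) : Prop :=
  X.Nonempty ∧ X ≠ Finset.univ

/-- The weight of the cut Δ(X) in the weighted graph with (symmetric) weights w. -/
noncomputable def cutWeight {V : Type*} [DecidableEq V] [Fintype V]
    (w : V → V → ℝ) (X : Finset V) : ℝ :=
  (1/2) * ∑ p : V × V,
    if (p.1 ∈ X ∧ p.2 ∉ X) ∨ (p.2 ∈ X ∧ p.1 ∉ X) then w p.1 p.2 else 0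

/-- Δ(X) is a minimum cut. -/
def isMinCut {V : Type*} [DecidableEq V] [Fintype V] (w : V → V → ℝ) (X : Finset V) : Prop :=
  isCutShore X ∧ ∀ Y : Finset V, isCutShore Y → cutWeight w X ≤ cutWeight w Y

/-- The characteristic vector of the cut Δ(X) among the edges (pairs of positive weight). -/
noncomputable def cutVec {V : Type*} [DecidableEq V] [Fintype V]
    (w : V → V → ℝ) (X : Finset V) : V × V → ℝ :=
  fun p => if (((p.1 ∈ X ∧ p.2 ∉ X) ∨ (p.2 ∈ X ∧ p.1 ∉ X)) ∧ 0 < w p.1 p.2) then 1 else 0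

section JainHelpers
variable {V : Type*} [DecidableEq V] [Fintype V]

lemma crossing_iff (X Y : Finset V) : crossing X Y ↔
    (∃ x, x ∈ X ∧ x ∈ Y) ∧ (∃ x, x ∈ X ∧ x ∉ Y) ∧ (∃ x, x ∈ Y ∧ x ∉ X) ∧
      (∃ x, x ∉ X ∧ x ∉ Y) := by
  simp [crossing, Finset.Nonempty, Finset.mem_inter, Finset.mem_sdiff, Finset.mem_compl]

lemma crossing_compl {X Y : Finset V} : crossing Xᶜ Yᶜ ↔ crossing X Y := by
  rw [crossing_iff, crossing_iff]
  simp only [Finset.mem_compl, not_not]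
  tauto

lemma crossing_of_inter {X Y Z : Finset V} (hXY : crossing X Y) (hZY : ¬ crossing Z Y)
    (h : crossing (X ∩ Y) Z) : crossing X Z := by
  rw [crossing_iff] at hXY h ⊢
  rw [crossing_iff] at hZY
  simp only [Finset.mem_inter] at h
  obtain ⟨⟨a, haX, haY⟩, ⟨b, hbX, hbY⟩, ⟨c, hcY, hcX⟩, ⟨d, hdX, hdY⟩⟩ := hXY
  obtain ⟨⟨p, ⟨hpX, hpY⟩, hpZ⟩, ⟨q, ⟨hqX, hqY⟩, hqZ⟩, ⟨r, hrZ, hr⟩, ⟨s, hs, hsZ⟩⟩ := h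
  simp only [not_and_or, not_exists, not_and, not_not] at hZY
  refine ⟨⟨p, hpX, hpZ⟩, ⟨q, hqX, hqZ⟩, ?_, ?_⟩
  · rcases hZY with h1 | h2 | h3 | h4
    · exact (h1 p).elim (fun h => absurd hpZ h) (fun h => absurd hpY h)
    · refine ⟨r, hrZ, ?_⟩
      have := h2 r; tauto
    · exact (h3 q).elim (fun h => absurd hqY h) (fun h => absurd hqZ (not_not_intro h))
    · exact ⟨d, (h4 d).resolve_right hdY, hdX⟩
  · rcases hZY with h1 | h2 | h3 | h4
    · exact (h1 p).elim (fun h => absurd hpZ h) (fun h => absurd hpY h)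
    · exact ⟨d, hdX, fun hdZ => ((h2 d).elim (fun h => h hdZ) (fun h => hdY h))⟩
    · exact (h3 q).elim (fun h => absurd hqY h) (fun h => absurd hqZ (not_not_intro h))
    · exact ⟨s, fun hsX => hs ⟨hsX, (h4 s).resolve_left hsZ⟩, hsZ⟩

lemma crossing_of_union {X Y Z : Finset V} (hXY : crossing X Y) (hZY : ¬ crossing Z Y)
    (h : crossing (X ∪ Y) Z) : crossing X Z := by
  have h1 : crossing ((X ∪ Y)ᶜ) Zᶜ := crossing_compl.mpr h
  rw [Finset.compl_union] at h1
  have hXY' : crossing Xᶜ Yᶜ := crossing_compl.mpr hXY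
  have hZY' : ¬ crossing Zᶜ Yᶜ := fun hc => hZY (crossing_compl.mp hc)
  exact crossing_compl.mp (crossing_of_inter hXY' hZY' h1)

def diagP (X Y : Finset V) (p : V × V) : Prop :=
  (p.1 ∈ X ∧ p.1 ∉ Y ∧ p.2 ∈ Y ∧ p.2 ∉ X) ∨ (p.1 ∈ Y ∧ p.1 ∉ X ∧ p.2 ∈ X ∧ p.2 ∉ Y)

instance (X Y : Finset V) (p : V × V) : Decidable (diagP X Y p) := by
  unfold diagP; infer_instance

lemma cutWeight_inter_union (w : V → V → ℝ) (X Y : Finset V) :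
    cutWeight w X + cutWeight w Y = cutWeight w (X ∩ Y) + cutWeight w (X ∪ Y)
      + ∑ p : V × V, (if diagP X Y p then w p.1 p.2 else 0) := by
  have key : ∀ p : V × V,
      (if (p.1 ∈ X ∧ p.2 ∉ X) ∨ (p.2 ∈ X ∧ p.1 ∉ X) then w p.1 p.2 else 0)
      + (if (p.1 ∈ Y ∧ p.2 ∉ Y) ∨ (p.2 ∈ Y ∧ p.1 ∉ Y) then w p.1 p.2 else 0)
      = (if (p.1 ∈ X ∩ Y ∧ p.2 ∉ X ∩ Y) ∨ (p.2 ∈ X ∩ Y ∧ p.1 ∉ X ∩ Y) then w p.1 p.2 else 0)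
      + (if (p.1 ∈ X ∪ Y ∧ p.2 ∉ X ∪ Y) ∨ (p.2 ∈ X ∪ Y ∧ p.1 ∉ X ∪ Y) then w p.1 p.2 else 0)
      + 2 * (if diagP X Y p then w p.1 p.2 else 0) := by
    intro p
    by_cases h1 : p.1 ∈ X <;> by_cases h2 : p.1 ∈ Y <;> by_cases h3 : p.2 ∈ X <;>
      by_cases h4 : p.2 ∈ Y <;>
      simp_all [diagP, Finset.mem_inter, Finset.mem_union] <;> ring
  have hsum := Finset.sum_congr rfl (fun p (_ : p ∈ Finset.univ) => key p)
  rw [Finset.sum_add_distrib, Finset.sum_add_distrib, Finset.sum_add_distrib,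
    ← Finset.mul_sum] at hsum
  unfold cutWeight
  linarith

lemma uncross {w : V → V → ℝ} (hnn : ∀ i j, 0 ≤ w i j) {X Y : Finset V}
    (hX : isMinCut w X) (hY : isMinCut w Y) (hc : crossing X Y) :
    isMinCut w (X ∩ Y) ∧ isMinCut w (X ∪ Y) ∧
      cutVec w X + cutVec w Y = cutVec w (X ∩ Y) + cutVec w (X ∪ Y) := by
  have hsh₁ : isCutShore (X ∩ Y) := by
    refine ⟨hc.1, fun h => hX.1.2 ?_⟩
    exact Finset.univ_subset_iff.mp (h ▸ Finset.inter_subset_left)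
  have hsh₂ : isCutShore (X ∪ Y) := by
    obtain ⟨x, hx⟩ := hX.1.1
    obtain ⟨z, hz⟩ := hc.2.2.2
    simp only [Finset.mem_inter, Finset.mem_compl] at hz
    refine ⟨⟨x, Finset.mem_union_left _ hx⟩, fun h => ?_⟩
    have : z ∈ X ∪ Y := h ▸ Finset.mem_univ z
    simp only [Finset.mem_union] at this
    tauto
  have h1 := hX.2 _ hsh₁
  have h2 := hX.2 _ hsh₂
  have h3 := hY.2 _ hX.1
  have h4 := hX.2 _ hY.1
  have hiden := cutWeight_inter_union w X Y
  have hDnn : 0 ≤ ∑ p : V × V, (if diagP X Y p then w p.1 p.2 else 0) :=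
    Finset.sum_nonneg (fun p _ => by split <;> [exact hnn _ _; exact le_refl 0])
  have hD : ∑ p : V × V, (if diagP X Y p then w p.1 p.2 else 0) = 0 := by linarith
  have hw₁ : cutWeight w (X ∩ Y) = cutWeight w X := by linarith
  have hw₂ : cutWeight w (X ∪ Y) = cutWeight w X := by linarith
  have hdiag0 : ∀ p : V × V, diagP X Y p → w p.1 p.2 = 0 := by
    intro p hp
    have := (Finset.sum_eq_zero_iff_of_nonneg
      (fun p _ => by split <;> [exact hnn _ _; exact le_refl 0])).mp hD p (Finset.mem_univ p)
    simpa [hp] using this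
  refine ⟨⟨hsh₁, fun Z hZ => hw₁ ▸ hX.2 Z hZ⟩, ⟨hsh₂, fun Z hZ => hw₂ ▸ hX.2 Z hZ⟩, ?_⟩
  funext p
  by_cases hw : 0 < w p.1 p.2
  · have hnd : ¬ diagP X Y p := fun hd => absurd (hdiag0 p hd) hw.ne'
    simp only [Pi.add_apply, cutVec, hw, and_true]
    by_cases h1 : p.1 ∈ X <;> by_cases h2 : p.1 ∈ Y <;> by_cases h3 : p.2 ∈ X <;>
      by_cases h4 : p.2 ∈ Y <;>
      simp_all [diagP, Finset.mem_inter, Finset.mem_union]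
  · simp [Pi.add_apply, cutVec, hw]

lemma cutVec_compl (w : V → V → ℝ) (X : Finset V) : cutVec w Xᶜ = cutVec w X := by
  funext p
  unfold cutVec
  have : ((p.1 ∈ Xᶜ ∧ p.2 ∉ Xᶜ) ∨ (p.2 ∈ Xᶜ ∧ p.1 ∉ Xᶜ)) ↔
      ((p.1 ∈ X ∧ p.2 ∉ X) ∨ (p.2 ∈ X ∧ p.1 ∉ X)) := by
    simp only [Finset.mem_compl, not_not]; tauto
  simp only [this]

end JainHelpers

/-- Jain's spanning lemma: a maximal cross-free subfamily of the minimum cuts spans the same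
space as all the minimum cuts. -/
theorem stmt13 {V : Type*} [DecidableEq V] [Fintype V] (w : V → V → ℝ)
    (hsym : ∀ i j, w i j = w j i) (hnn : ∀ i j, 0 ≤ w i j)
    (L : Set (Finset V)) (hL : ∀ X ∈ L, isMinCut w X)
    (hcrossfree : ∀ X ∈ L, ∀ Y ∈ L, ¬ crossing X Y)
    (hmax : ∀ X : Finset V, isMinCut w X → X ∉ L → Xᶜ ∉ L → ∃ Y ∈ L, crossing X Y) :
    Submodule.span ℝ (cutVec w '' L) =
      Submodule.span ℝ {v : V × V → ℝ | ∃ X : Finset V, isMinCut w X ∧ v = cutVec w X} := by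
  have main : ∀ n : ℕ, ∀ X : Finset V, isMinCut w X →
      {Z | Z ∈ L ∧ crossing X Z}.ncard = n →
      cutVec w X ∈ Submodule.span ℝ (cutVec w '' L) := by
    intro n
    induction n using Nat.strong_induction_on with
    | _ n ih =>
      intro X hX hn
      by_cases h1 : X ∈ L
      · exact Submodule.subset_span ⟨X, h1, rfl⟩
      by_cases h2 : Xᶜ ∈ L
      · rw [← cutVec_compl]
        exact Submodule.subset_span ⟨Xᶜ, h2, rfl⟩
      obtain ⟨Y, hYL, hcross⟩ := hmax X hX h1 h2
      have hY := hL Y hYL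
      obtain ⟨hmc₁, hmc₂, hvec⟩ := uncross hnn hX hY hcross
      have hYmem : Y ∈ {Z | Z ∈ L ∧ crossing X Z} := ⟨hYL, hcross⟩
      have hfin : {Z | Z ∈ L ∧ crossing X Z}.Finite := Set.toFinite _
      -- the intersection crosses strictly fewer members of L
      have hsub₁ : {Z | Z ∈ L ∧ crossing (X ∩ Y) Z} ⊆ {Z | Z ∈ L ∧ crossing X Z} \ {Y} := by
        rintro Z ⟨hZL, hZc⟩
        refine ⟨⟨hZL, crossing_of_inter hcross (hcrossfree Z hZL Y hYL) hZc⟩, ?_⟩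
        intro hZY
        rw [Set.mem_singleton_iff] at hZY
        subst hZY
        obtain ⟨z, hz⟩ := hZc.2.1
        simp only [Finset.mem_sdiff, Finset.mem_inter] at hz
        tauto
      have hsub₂ : {Z | Z ∈ L ∧ crossing (X ∪ Y) Z} ⊆ {Z | Z ∈ L ∧ crossing X Z} \ {Y} := by
        rintro Z ⟨hZL, hZc⟩
        refine ⟨⟨hZL, crossing_of_union hcross (hcrossfree Z hZL Y hYL) hZc⟩, ?_⟩
        intro hZY
        rw [Set.mem_singleton_iff] at hZY
        subst hZY
        obtain ⟨z, hz⟩ := hZc.2.2.1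
        simp only [Finset.mem_sdiff, Finset.mem_union] at hz
        tauto
      have hlt : ({Z | Z ∈ L ∧ crossing X Z} \ {Y}).ncard < n := by
        rw [← hn]
        exact Set.ncard_diff_singleton_lt_of_mem hYmem hfin
      have hlt₁ : {Z | Z ∈ L ∧ crossing (X ∩ Y) Z}.ncard < n :=
        lt_of_le_of_lt (Set.ncard_le_ncard hsub₁ hfin.diff) hlt
      have hlt₂ : {Z | Z ∈ L ∧ crossing (X ∪ Y) Z}.ncard < n :=
        lt_of_le_of_lt (Set.ncard_le_ncard hsub₂ hfin.diff) hlt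
      have m₁ := ih _ hlt₁ (X ∩ Y) hmc₁ rfl
      have m₂ := ih _ hlt₂ (X ∪ Y) hmc₂ rfl
      have mY : cutVec w Y ∈ Submodule.span ℝ (cutVec w '' L) :=
        Submodule.subset_span ⟨Y, hYL, rfl⟩
      have heq : cutVec w X = cutVec w (X ∩ Y) + cutVec w (X ∪ Y) - cutVec w Y :=
        eq_sub_of_add_eq hvec
      rw [heq]
      exact Submodule.sub_mem _ (Submodule.add_mem _ m₁ m₂) mY
  apply le_antisymm
  · apply Submodule.span_mono
    rintro v ⟨X, hXL, rfl⟩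
    exact ⟨X, hL X hXL, rfl⟩
  · rw [Submodule.span_le]
    rintro v ⟨X, hX, rfl⟩
    exact main _ X hX rfl
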